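/- In a projective space P of dimension at least 3 with horizon W satisfying the size condition, if three proper lines k₁, k₂, k₃ form a triangle with at least one improper vertex, then there exists a proper line intersecting k₁, k₂, k₃ in three pairwise distinct proper points. -/

import Mathlib

/-- A projective space of dimension at least 3, given by its point set `S` and its
set of lines: any two points lie on a unique line, the Veblen (Pasch) axiom holds,
and there exist two disjoint lines (dimension ≥ 3). -/
structure ProjSpace (S : Type*) where
  L : Set (Set S)
  two_points : ∀ k ∈ L, ∃ a ∈ k, ∃ b ∈ k, a ≠ b
  unique_meet : ∀ k ∈ L, ∀ l ∈ L, k ≠ l → (k ∩ l).Subsingleton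
  join : ∀ a b : S, a ≠ b → ∃ k ∈ L, a ∈ k ∧ b ∈ k
  veblen : ∀ l₁ ∈ L, ∀ l₂ ∈ L, ∀ l₃ ∈ L, ∀ l₄ ∈ L, ∀ p a b c d : S,
    l₁ ≠ l₂ → p ≠ a → p ≠ b → p ≠ c → p ≠ d →
    p ∈ l₁ → a ∈ l₁ → c ∈ l₁ → p ∈ l₂ → b ∈ l₂ → d ∈ l₂ →
    a ∈ l₃ → b ∈ l₃ → c ∈ l₄ → d ∈ l₄ → (l₃ ∩ l₄).Nonempty
  dim3 : ∃ k ∈ L, ∃ l ∈ L, k ∩ l = ∅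

namespace ProjSpace

variable {S : Type*}

/-- A subspace: any line through two of its points is contained in it. -/
def IsSubspace (P : ProjSpace S) (X : Set S) : Prop :=
  ∀ k ∈ P.L, ∀ a ∈ k, ∀ b ∈ k, a ≠ b → a ∈ X → b ∈ X → k ⊆ X

/-- The subspace spanned by a point set. -/
def span (P : ProjSpace S) (X : Set S) : Set S :=
  ⋂₀ {Y | P.IsSubspace Y ∧ X ⊆ Y}

/-- A plane: the span of a line together with a point outside it. -/
def IsPlane (P : ProjSpace S) (Pl : Set S) : Prop :=
  ∃ k ∈ P.L, ∃ a, a ∉ k ∧ Pl = P.span (insert a k)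

/-- `HasIndex P W lam`: some line has exactly `lam` points in `W` and every line not
contained in `W` has at most `lam` points in `W`. -/
def HasIndex (P : ProjSpace S) (W : Set S) (lam : ℕ) : Prop :=
  (∃ k ∈ P.L, (k ∩ W).encard = (lam : ℕ∞)) ∧
    ∀ k ∈ P.L, ¬ k ⊆ W → (k ∩ W).encard ≤ (lam : ℕ∞)

/-- Three lines form a triangle: pairwise distinct, pairwise intersecting,
not concurrent. -/
def LineTriangle (P : ProjSpace S) (k₁ k₂ k₃ : Set S) : Prop :=
  k₁ ∈ P.L ∧ k₂ ∈ P.L ∧ k₃ ∈ P.L ∧ k₁ ≠ k₂ ∧ k₁ ≠ k₃ ∧ k₂ ≠ k₃ ∧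
    (k₁ ∩ k₂).Nonempty ∧ (k₁ ∩ k₃).Nonempty ∧ (k₂ ∩ k₃).Nonempty ∧
    ¬ (k₁ ∩ k₂ ∩ k₃).Nonempty

/-- Parallelism w.r.t. the horizon `W`: the lines meet, and only inside `W`. -/
def Par (W : Set S) (k₁ k₂ : Set S) : Prop :=
  (k₁ ∩ k₂).Nonempty ∧ k₁ ∩ k₂ ⊆ W

end ProjSpace

private lemma enat_diff_singleton_lb {α : Type*} {s : Set α} {x : α} {n : ℕ∞}
    (h : n + 1 ≤ s.encard) : n ≤ (s \ {x}).encard := by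
  have h1 : s.encard ≤ (s \ {x}).encard + 1 := by
    calc s.encard ≤ (insert x (s \ {x})).encard :=
          Set.encard_le_encard (by intro a ha; by_cases hax : a = x <;> simp [hax, ha])
      _ ≤ (s \ {x}).encard + 1 := Set.encard_insert_le _ _
  exact (WithTop.add_le_add_iff_right ENat.one_ne_top).mp (h.trans h1)

open ProjSpace in
/-- a triangle of proper lines with at least one improper vertex admits a
proper line meeting all three sides in pairwise distinct proper points. -/
theorem veblen_for_complement {S : Type*} (P : ProjSpace S) (W : Set S) (lam : ℕ)
    (hlam : 0 < lam) (hind : P.HasIndex W lam)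
    (hsize : ∀ k ∈ P.L, 2 * (lam : ℕ∞) + 2 ≤ k.encard)
    (k₁ k₂ k₃ : Set S) (htri : LineTriangle P k₁ k₂ k₃)
    (hp₁ : ¬ k₁ ⊆ W) (hp₂ : ¬ k₂ ⊆ W) (hp₃ : ¬ k₃ ⊆ W)
    (himp : ∃ x ∈ W, x ∈ k₁ ∩ k₂ ∨ x ∈ k₁ ∩ k₃ ∨ x ∈ k₂ ∩ k₃) :
    ∃ l ∈ P.L, ¬ l ⊆ W ∧ ∃ c₁ c₂ c₃ : S,
      c₁ ∉ W ∧ c₂ ∉ W ∧ c₃ ∉ W ∧ c₁ ≠ c₂ ∧ c₁ ≠ c₃ ∧ c₂ ≠ c₃ ∧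
      c₁ ∈ l ∩ k₁ ∧ c₂ ∈ l ∩ k₂ ∧ c₃ ∈ l ∩ k₃ := by
  obtain ⟨hL1, hL2, hL3, hne12, hne13, hne23, hm12, hm13, hm23, hncon⟩ := htri
  obtain ⟨a, ha1, ha2⟩ := hm12
  obtain ⟨b, hb1, hb3⟩ := hm13
  obtain ⟨c, hc2, hc3⟩ := hm23
  have hsub12 := P.unique_meet k₁ hL1 k₂ hL2 hne12
  have hsub13 := P.unique_meet k₁ hL1 k₃ hL3 hne13
  have hsub23 := P.unique_meet k₂ hL2 k₃ hL3 hne23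
  have haK3 : a ∉ k₃ := fun h => hncon ⟨a, ⟨ha1, ha2⟩, h⟩
  have hbK2 : b ∉ k₂ := fun h => hncon ⟨b, ⟨hb1, h⟩, hb3⟩
  have hcK1 : c ∉ k₁ := fun h => hncon ⟨c, ⟨h, hc2⟩, hc3⟩
  have hab : a ≠ b := fun h => haK3 (h ▸ hb3)
  have hac : a ≠ c := fun h => haK3 (h ▸ hc3)
  -- proper lines have at least lam + 2 proper points
  have hproper : ∀ k ∈ P.L, ¬ k ⊆ W → (lam : ℕ∞) + 2 ≤ (k \ W).encard := by
    intro k hk hkW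
    have h1 : (k \ W).encard + (k ∩ W).encard = k.encard :=
      Set.encard_diff_add_encard_inter k W
    have h4 : (lam : ℕ∞) + 2 + lam ≤ (k \ W).encard + lam := by
      calc (lam : ℕ∞) + 2 + lam = 2 * lam + 2 := by ring
        _ ≤ k.encard := hsize k hk
        _ = (k \ W).encard + (k ∩ W).encard := h1.symm
        _ ≤ (k \ W).encard + lam := add_le_add_right (hind.2 k hk hkW) _
    exact (WithTop.add_le_add_iff_right (ENat.coe_ne_top lam)).mp h4
  -- choose a proper point p₁ on k₁, distinct from the vertices a and b
  have hC1 : (lam : ℕ∞) ≤ (((k₁ \ W) \ {a}) \ {b}).encard := by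
    apply enat_diff_singleton_lb
    apply enat_diff_singleton_lb
    calc (lam : ℕ∞) + 1 + 1 = (lam : ℕ∞) + 2 := by ring
      _ ≤ (k₁ \ W).encard := hproper k₁ hL1 hp₁
  have hC1ne : (((k₁ \ W) \ {a}) \ {b}).Nonempty := by
    rw [← Set.encard_pos]
    exact lt_of_lt_of_le (by exact_mod_cast hlam) hC1
  obtain ⟨p₁, hp1m⟩ := hC1ne
  obtain ⟨⟨⟨hp1K1, hp1W⟩, hp1a⟩, hp1b⟩ := hp1m
  rw [Set.mem_singleton_iff] at hp1a hp1b
  have hp1K2 : p₁ ∉ k₂ := fun h => hp1a (hsub12 ⟨hp1K1, h⟩ ⟨ha1, ha2⟩)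
  have hp1K3 : p₁ ∉ k₃ := fun h => hp1b (hsub13 ⟨hp1K1, h⟩ ⟨hb1, hb3⟩)
  -- candidate second points
  set C : Set S := ((k₂ \ W) \ {a}) \ {c} with hCdef
  have hCsub : ∀ p₂ ∈ C, p₂ ∈ k₂ ∧ p₂ ∉ W ∧ p₂ ≠ a ∧ p₂ ≠ c := by
    intro p₂ hp2
    obtain ⟨⟨⟨h1, h2⟩, h3⟩, h4⟩ := hp2
    exact ⟨h1, h2, h3, h4⟩
  -- each candidate yields a line through p₁ meeting k₃
  have key : ∀ p₂ ∈ C, ∃ q l, l ∈ P.L ∧ p₁ ∈ l ∧ p₂ ∈ l ∧ q ∈ l ∧ q ∈ k₃ := by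
    intro p₂ hp2
    obtain ⟨hp2K2, _, hp2a, _⟩ := hCsub p₂ hp2
    have hp12 : p₁ ≠ p₂ := fun h => hp1K2 (h ▸ hp2K2)
    obtain ⟨l, hlL, hl1, hl2⟩ := P.join p₁ p₂ hp12
    obtain ⟨q, hql, hqk3⟩ :=
      P.veblen k₁ hL1 k₂ hL2 l hlL k₃ hL3 a p₁ p₂ b c hne12
        (Ne.symm hp1a) (Ne.symm hp2a) hab hac ha1 hp1K1 hb1 ha2 hp2K2 hc2
        hl1 hl2 hb3 hc3
    exact ⟨q, l, hlL, hl1, hl2, hql, hqk3⟩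
  choose! q lf hlL hl1 hl2 hql hqk3 using key
  -- basic facts about the chosen lines
  have hlne2 : ∀ p₂ ∈ C, lf p₂ ≠ k₂ := by
    intro p₂ hp2 h
    exact hp1K2 (h ▸ hl1 p₂ hp2)
  have hlne1 : ∀ p₂ ∈ C, lf p₂ ≠ k₁ := by
    intro p₂ hp2 h
    obtain ⟨hp2K2, _, hp2a, _⟩ := hCsub p₂ hp2
    exact hp2a (hsub12 ⟨h ▸ hl2 p₂ hp2, hp2K2⟩ ⟨ha1, ha2⟩)
  have hlne3 : ∀ p₂ ∈ C, lf p₂ ≠ k₃ := by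
    intro p₂ hp2 h
    exact hp1K3 (h ▸ hl1 p₂ hp2)
  have hqne1 : ∀ p₂ ∈ C, q p₂ ≠ p₁ := fun p₂ hp2 h => hp1K3 (h ▸ hqk3 p₂ hp2)
  -- main claim: some candidate gives a proper intersection point with k₃
  have main : ∃ p₂ ∈ C, q p₂ ∉ W := by
    by_contra hcon
    push_neg at hcon
    set B : Set S := ((k₃ ∩ W) \ {b}) \ {c} with hBdef
    have himg : ∀ p₂ ∈ C, q p₂ ∈ B := by
      intro p₂ hp2
      obtain ⟨hp2K2, _, hp2a, hp2c⟩ := hCsub p₂ hp2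
      have hqb : q p₂ ≠ b := by
        intro h
        have hsub := P.unique_meet k₁ hL1 (lf p₂) (hlL p₂ hp2) (Ne.symm (hlne1 p₂ hp2))
        exact hp1b (hsub ⟨hp1K1, hl1 p₂ hp2⟩ ⟨hb1, h ▸ hql p₂ hp2⟩)
      have hqc : q p₂ ≠ c := by
        intro h
        have hsub := P.unique_meet k₂ hL2 (lf p₂) (hlL p₂ hp2) (Ne.symm (hlne2 p₂ hp2))
        exact hp2c (hsub ⟨hp2K2, hl2 p₂ hp2⟩ ⟨hc2, h ▸ hql p₂ hp2⟩)
      exact ⟨⟨⟨hqk3 p₂ hp2, hcon p₂ hp2⟩, hqb⟩, hqc⟩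
    have hinj : Set.InjOn q C := by
      intro p₂ hp2 p₂' hp2' heq
      by_cases hll : lf p₂ = lf p₂'
      · have hsub := P.unique_meet (lf p₂) (hlL p₂ hp2) k₂ hL2 (hlne2 p₂ hp2)
        exact hsub ⟨hl2 p₂ hp2, (hCsub p₂ hp2).1⟩
          ⟨hll ▸ hl2 p₂' hp2', (hCsub p₂' hp2').1⟩
      · have hsub := P.unique_meet (lf p₂) (hlL p₂ hp2) (lf p₂') (hlL p₂' hp2') hll
        have : q p₂ = p₁ := hsub ⟨hql p₂ hp2, heq ▸ hql p₂' hp2'⟩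
          ⟨hl1 p₂ hp2, hl1 p₂' hp2'⟩
        exact absurd this (hqne1 p₂ hp2)
    have hCB : C.encard ≤ B.encard := by
      rw [← hinj.encard_image]
      exact Set.encard_le_encard (by rintro _ ⟨x, hx, rfl⟩; exact himg x hx)
    have hWk3 : (k₃ ∩ W).encard ≤ lam := hind.2 k₃ hL3 hp₃
    have hClb : (lam : ℕ∞) ≤ C.encard := by
      apply enat_diff_singleton_lb
      apply enat_diff_singleton_lb
      calc (lam : ℕ∞) + 1 + 1 = (lam : ℕ∞) + 2 := by ring
        _ ≤ (k₂ \ W).encard := hproper k₂ hL2 hp₂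
    obtain ⟨x, hxW, hx12 | hx13 | hx23⟩ := himp
    ·
      have hxa : x = a := hsub12 hx12 ⟨ha1, ha2⟩
      have haW : a ∈ W := hxa ▸ hxW
      have hrw : (k₂ \ W) \ {a} = k₂ \ W :=
        Set.diff_singleton_eq_self (fun h => h.2 haW)
      have hClb' : (lam : ℕ∞) + 1 ≤ C.encard := by
        rw [hCdef, hrw]
        apply enat_diff_singleton_lb
        calc (lam : ℕ∞) + 1 + 1 = (lam : ℕ∞) + 2 := by ring
          _ ≤ (k₂ \ W).encard := hproper k₂ hL2 hp₂
      have hBub : B.encard ≤ lam :=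
        le_trans (Set.encard_le_encard (fun y hy => hy.1.1)) hWk3
      have : (lam : ℕ∞) + 1 ≤ lam := le_trans hClb' (le_trans hCB hBub)
      norm_cast at this; omega
    ·
      have hxb : x = b := hsub13 hx13 ⟨hb1, hb3⟩
      have hbW : b ∈ W := hxb ▸ hxW
      have hB1 : B ⊆ (k₃ ∩ W) \ {b} := fun y hy => hy.1
      have h5 : ((k₃ ∩ W) \ {b}).encard + 1 = (k₃ ∩ W).encard :=
        Set.encard_diff_singleton_add_one ⟨hb3, hbW⟩
      have : (lam : ℕ∞) + 1 ≤ lam := by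
        calc (lam : ℕ∞) + 1 ≤ B.encard + 1 :=
              add_le_add_left (le_trans hClb hCB) 1
          _ ≤ ((k₃ ∩ W) \ {b}).encard + 1 :=
              add_le_add_left (Set.encard_le_encard hB1) 1
          _ = (k₃ ∩ W).encard := h5
          _ ≤ lam := hWk3
      norm_cast at this; omega
    ·
      have hxc : x = c := hsub23 hx23 ⟨hc2, hc3⟩
      have hcW : c ∈ W := hxc ▸ hxW
      have hB1 : B ⊆ (k₃ ∩ W) \ {c} := fun y hy => ⟨hy.1.1, hy.2⟩
      have h5 : ((k₃ ∩ W) \ {c}).encard + 1 = (k₃ ∩ W).encard :=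
        Set.encard_diff_singleton_add_one ⟨hc3, hcW⟩
      have : (lam : ℕ∞) + 1 ≤ lam := by
        calc (lam : ℕ∞) + 1 ≤ B.encard + 1 :=
              add_le_add_left (le_trans hClb hCB) 1
          _ ≤ ((k₃ ∩ W) \ {c}).encard + 1 :=
              add_le_add_left (Set.encard_le_encard hB1) 1
          _ = (k₃ ∩ W).encard := h5
          _ ≤ lam := hWk3
      norm_cast at this; omega
  obtain ⟨p₂, hp2, hqW⟩ := main
  obtain ⟨hp2K2, hp2W, hp2a, hp2c⟩ := hCsub p₂ hp2
  refine ⟨lf p₂, hlL p₂ hp2, fun h => hp1W (h (hl1 p₂ hp2)), p₁, p₂, q p₂,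
    hp1W, hp2W, hqW, ?_, ?_, ?_, ⟨hl1 p₂ hp2, hp1K1⟩, ⟨hl2 p₂ hp2, hp2K2⟩,
    ⟨hql p₂ hp2, hqk3 p₂ hp2⟩⟩
  · exact fun h => hp1K2 (h ▸ hp2K2)
  · exact fun h => (hqne1 p₂ hp2) h.symm
  · intro h
    exact hp2c (hsub23 ⟨hp2K2, h ▸ hqk3 p₂ hp2⟩ ⟨hc2, hc3⟩)
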